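/- Let E1 be the polynomial F2-algebra on generators h_{ij} for i ≥ 1, j ≥ 0, with differential (derivation) d(h_{ij}) = Σ_{0<k<i} h_{kj}·h_{i−k, j+k}. Define primed classes in a localization inverting h_{11} (written h1): h'_{n0} = h_{n0} + h1^{-1}·h_{20}·h_{n−1,1} for n ≥ 3. Then d(h'_{n0}) = Σ_{j=3}^{n−1} h_{n−j,j}·h'_{j0} modulo the ideal generated by h1-multiples of classes involving columns 1 and 2; concretely, in the localized algebra E1[h1^{-1}] with the induced derivation, d(h'_{n0}) = Σ_{j=3}^{n−1} h_{n−j,j}·h'_{j0} + h1·(an element of the subalgebra F1 generated by h_{10}, h_{20}, the h_{n1} (n ≥ 2), and the h'_{n2}). -/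

import Mathlib

open MvPolynomial

noncomputable section

/-- `L = F2[h₁^{±1}]`. -/
def L : Type := LaurentPolynomial (ZMod 2)

instance : CommRing L := inferInstanceAs (CommRing (LaurentPolynomial (ZMod 2)))

/-- The invertible element `h₁`. -/
def h1 : L := LaurentPolynomial.T 1
/-- Its inverse `h₁⁻¹`. -/
def h1inv : L := LaurentPolynomial.T (-1)

/-- Index type for the generators `h_{ij}` other than the inverted `h₁ = h_{11}`. -/
abbrev σ : Type := {p : ℕ × ℕ // p ≠ (1, 1)}

/-- The localized May `E₁`-page `E₁[h₁^{-1}]`, modeled as a polynomial algebra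
over `F2[h₁^{±1}]` on the generators `h_{ij}` with `(i,j) ≠ (1,1)`. -/
abbrev E : Type := MvPolynomial σ L

/-- The generator `h_{ij}`, where `h_{11} = h₁` is the invertible scalar. -/
def H : ℕ × ℕ → E := fun p => if hp : p = (1, 1) then C h1 else X ⟨p, hp⟩

/-- The May `d₁` differential: `d(h_{ij}) = Σ_{0<k<i} h_{kj}·h_{i−k,j+k}`. -/
noncomputable def d : Derivation L E E :=
  MvPolynomial.mkDerivation L
    (fun q : σ => ∑ k ∈ Finset.Ioo 0 q.1.1, H (k, q.1.2) * H (q.1.1 - k, q.1.2 + k))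

/-- `h'_{n0} = h_{n0} + h₁^{-1}·h_{20}·h_{n−1,1}`. -/
def Hp0 (n : ℕ) : E := H (n, 0) + C h1inv * (H (2, 0) * H (n - 1, 1))

/-- `h'_{n2} = h_{n2} + h₁^{-1}·Σ_{k=2}^{n−1} h_{k1}·h_{n−k,k}`. -/
def Hp2 (n : ℕ) : E :=
  H (n, 2) + C h1inv * ∑ k ∈ Finset.Icc 2 (n - 1), H (k, 1) * H (n - k, k)

/-- The subalgebra `F₁` generated over `F2[h₁^{±1}]` by `h_{10}`, `h_{20}`,
the `h_{n1}` (`n ≥ 2`) and the `h'_{n2}` (`n ≥ 1`). -/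
def F1 : Subalgebra L E :=
  Algebra.adjoin L
    ({H (1, 0), H (2, 0)} ∪ (Set.range fun n : ℕ => H (n + 2, 1)) ∪
      (Set.range fun n : ℕ => Hp2 (n + 1)))


lemma twoL : (2 : L) = 0 := by
  show (2 : LaurentPolynomial (ZMod 2)) = 0
  have h : ((2:ℕ) : LaurentPolynomial (ZMod 2))
      = algebraMap (ZMod 2) (LaurentPolynomial (ZMod 2)) ((2:ℕ) : ZMod 2) :=
    (map_natCast _ 2).symm
  rw [show (((2:ℕ) : ZMod 2)) = 0 by decide, map_zero] at h
  simpa using h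

lemma twoE : (2 : E) = 0 := by
  have : ((2:ℕ) : E) = C ((2:ℕ) : L) := (map_natCast (C : L →+* E) 2).symm
  simpa [twoL] using this

lemma hC : (C h1inv : E) * C h1 = 1 := by
  rw [← map_mul]
  have : h1inv * h1 = 1 := by
    show (LaurentPolynomial.T (R := ZMod 2) (-1) * LaurentPolynomial.T 1 : LaurentPolynomial (ZMod 2)) = (1 : LaurentPolynomial (ZMod 2))
    have h := (LaurentPolynomial.T_add (R := ZMod 2) (-1) 1).symm
    rw [show (-1 : ℤ) + 1 = 0 by norm_num, LaurentPolynomial.T_zero] at h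
    exact h
  rw [this, map_one]

lemma dC (a : L) : d (C a) = 0 := by
  have := Derivation.map_algebraMap d a
  rwa [MvPolynomial.algebraMap_eq] at this

lemma dH (i j : ℕ) (h : (i, j) ≠ (1, 1)) :
    d (H (i, j)) = ∑ k ∈ Finset.Ioo 0 i, H (k, j) * H (i - k, j + k) := by
  rw [show H (i, j) = X ⟨(i, j), h⟩ from dif_neg h, d, MvPolynomial.mkDerivation_X]

lemma sum_Icc_split (f : ℕ → E) (a b : ℕ) (h : a ≤ b) :
    ∑ k ∈ Finset.Icc a b, f k = f a + ∑ k ∈ Finset.Icc (a+1) b, f k := by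
  rw [Finset.Icc_add_one_left_eq_Ioc, ← Finset.sum_erase_add _ _ (Finset.mem_Icc.2 ⟨le_refl a, h⟩),
    Finset.Icc_erase_left, add_comm]

/-- for `n ≥ 3`,
`d(h'_{n0}) = Σ_{j=3}^{n−1} h_{n−j,j}·h'_{j0} + h₁·(an element of F₁)`
in the `h₁`-localized May `E₁`-page. -/
theorem stmt10 (n : ℕ) (hn : 3 ≤ n) :
    ∃ w ∈ F1,
      d (Hp0 n) = (∑ j ∈ Finset.Icc 3 (n - 1), H (n - j, j) * Hp0 j) + C h1 * w := by
  refine ⟨0, Subalgebra.zero_mem _, ?_⟩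
  rw [mul_zero, add_zero]
  -- expand the derivation
  have expand : d (Hp0 n) = d (H (n,0))
      + C h1inv * (d (H (2,0)) * H (n-1,1) + H (2,0) * d (H (n-1,1))) := by
    rw [Hp0, map_add]
    rw [show (C h1inv : E) * (H (2,0) * H (n-1,1)) = h1inv • (H (2,0) * H (n-1,1)) from
      MvPolynomial.C_mul']
    rw [Derivation.map_smul, Derivation.leibniz]
    rw [MvPolynomial.smul_eq_C_mul]
    simp only [smul_eq_mul]
    ring
  -- d H(2,0)
  have d20 : d (H (2,0)) = H (1,0) * C h1 := by
    rw [dH 2 0 (by simp)]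
    rw [show Finset.Ioo 0 2 = {1} from rfl, Finset.sum_singleton,
      show ((2:ℕ) - 1, 0 + 1) = ((1:ℕ),(1:ℕ)) from rfl,
      show H (1,1) = C h1 from dif_pos rfl]
  -- d H(n,0)
  have dn0 : d (H (n,0)) = H (1,0) * H (n-1,1) + H (2,0) * H (n-2,2)
      + ∑ k ∈ Finset.Icc 3 (n-1), H (k,0) * H (n-k,k) := by
    rw [dH n 0 (by simp)]
    rw [show Finset.Ioo 0 n = Finset.Icc 1 (n-1) by ext x; simp; omega]
    rw [sum_Icc_split _ 1 (n-1) (by omega), sum_Icc_split _ 2 (n-1) (by omega)]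
    simp only [zero_add]
    ring
  -- d H(n-1,1)
  have dn1 : d (H (n-1,1)) = C h1 * H (n-2,2)
      + ∑ k ∈ Finset.Icc 2 (n-2), H (k,1) * H (n-1-k, 1+k) := by
    rw [dH (n-1) 1 (by simp; omega)]
    rw [show Finset.Ioo 0 (n-1) = Finset.Icc 1 (n-2) by ext x; simp; omega]
    rw [sum_Icc_split _ 1 (n-2) (by omega)]
    congr 1
  -- RHS expansion
  have rhs : ∑ j ∈ Finset.Icc 3 (n-1), H (n-j,j) * Hp0 j
      = (∑ k ∈ Finset.Icc 3 (n-1), H (k,0) * H (n-k,k))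
      + C h1inv * (H (2,0) * ∑ k ∈ Finset.Icc 2 (n-2), H (k,1) * H (n-1-k, 1+k)) := by
    simp only [Hp0, mul_add]
    rw [Finset.sum_add_distrib]
    congr 1
    · exact Finset.sum_congr rfl (fun j hj => mul_comm _ _)
    · rw [Finset.mul_sum, Finset.mul_sum]
      rw [show Finset.Icc 3 (n-1) = (Finset.Icc 2 (n-2)).map (addRightEmbedding 1) by
        rw [Finset.map_add_right_Icc]; congr 1 <;> omega]
      rw [Finset.sum_map]
      refine Finset.sum_congr rfl (fun k hk => ?_)
      simp only [addRightEmbedding_apply]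
      rw [show k + 1 - 1 = k by omega, show n - (k+1) = n - 1 - k by omega,
        show (1 : ℕ) + k = k + 1 by omega]
      ring
  rw [expand, dn0, dn1, d20, rhs]
  linear_combination (H (1,0) * H (n-1,1) + H (2,0) * H (n-2,2)) * hC
    + (H (1,0) * H (n-1,1) + H (2,0) * H (n-2,2)) * twoE


end
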